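/- arXiv:1209.4438 — 2 statements merged into one kernel-verified Lean document; each statement's English description precedes it below -/
import Mathlib

section
/- Let V = Z_9 (the integers modulo 9) and let C = {(0+a, 1+a, 8+a, 5+a) : a ∈ Z_9} be the set of nine 4-cycles obtained by developing the 4-cycle (0,1,8,5) under Z_9. Then (V, C) is a 4-cycle system of order 9, i.e., the edge sets of these nine 4-cycles partition the edge set of the complete graph K_9, and moreover (V, C) is strictly 4-sparse. -/
open Finset

/-- The edge set of the 4-cycle `(a, b, c, d)`: edges {a,b}, {b,c}, {c,d}, {d,a}. -/
def cycEdges {V : Type*} [DecidableEq V] (a b c d : V) : Finset (Sym2 V) :=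
  {s(a, b), s(b, c), s(c, d), s(d, a)}

/-- `E` is the edge set of a 4-cycle on four distinct vertices. -/
def IsFourCycle {V : Type*} [DecidableEq V] (E : Finset (Sym2 V)) : Prop :=
  ∃ a b c d : V, ([a, b, c, d] : List V).Nodup ∧ E = cycEdges a b c d

/-- The set of vertices covered by a set of edges. -/
def edgeVerts {V : Type*} [DecidableEq V] (E : Finset (Sym2 V)) : Finset V :=
  E.sup (Sym2.lift ⟨fun x y => ({x, y} : Finset V), fun x y => Finset.pair_comm x y⟩)

/-- A `(k, l)`-configuration: a set of `l` pairwise edge-disjoint 4-cycles whose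
union contains exactly `k` vertices. -/
def IsConfiguration {V : Type*} [DecidableEq V] (k l : ℕ)
    (D : Finset (Finset (Sym2 V))) : Prop :=
  D.card = l ∧ (∀ E ∈ D, IsFourCycle E) ∧
    (∀ E ∈ D, ∀ F ∈ D, E ≠ F → Disjoint E F) ∧
    (D.sup edgeVerts).card = k

/-- `C` is a 4-cycle system: a collection of 4-cycles whose edge sets partition
the edge set of the complete graph on `V`. -/
def IsFourCycleSystem {V : Type*} [DecidableEq V] (C : Finset (Finset (Sym2 V))) : Prop :=
  (∀ E ∈ C, IsFourCycle E) ∧ ∀ e : Sym2 V, ¬ e.IsDiag → ∃! E, E ∈ C ∧ e ∈ E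

/-- `C` is a 4-cycle packing: a set of pairwise edge-disjoint 4-cycles. -/
def IsFourCyclePacking {V : Type*} [DecidableEq V] (C : Finset (Finset (Sym2 V))) : Prop :=
  (∀ E ∈ C, IsFourCycle E) ∧ ∀ E ∈ C, ∀ F ∈ C, E ≠ F → Disjoint E F

/-- `C` is `r`-sparse: it contains no `(j+3, j)`-configuration for `2 ≤ j ≤ r`. -/
def RSparse {V : Type*} [DecidableEq V] (r : ℕ) (C : Finset (Finset (Sym2 V))) : Prop :=
  ∀ j, 2 ≤ j → j ≤ r → ∀ D ⊆ C, ¬ IsConfiguration (j + 3) j D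

/-- Two 4-cycles form a double-diamond: they are `(a,b,c,d)` and `(a,e,c,f)`,
sharing the diagonal {a,c}. -/
def IsDoubleDiamond {V : Type*} [DecidableEq V] (E F : Finset (Sym2 V)) : Prop :=
  ∃ a b c d e f : V, ([a, b, c, d, e, f] : List V).Nodup ∧
    E = cycEdges a b c d ∧ F = cycEdges a e c f

/-- `C` is D-avoiding: no two of its 4-cycles form a double-diamond. -/
def DAvoiding {V : Type*} [DecidableEq V] (C : Finset (Finset (Sym2 V))) : Prop :=
  ∀ E ∈ C, ∀ F ∈ C, ¬ IsDoubleDiamond E F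

/-- `C` is strictly `r`-sparse: `r`-sparse and D-avoiding. -/
def StrictlyRSparse {V : Type*} [DecidableEq V] (r : ℕ)
    (C : Finset (Finset (Sym2 V))) : Prop :=
  RSparse r C ∧ DAvoiding C

/-! ### Auxiliary material for the proof -/

abbrev C9 : Finset (Finset (Sym2 (ZMod 9))) :=
  (Finset.univ : Finset (ZMod 9)).image fun a =>
    cycEdges (0 + a) (1 + a) (8 + a) (5 + a)

lemma dd_ne' {V : Type*} [DecidableEq V] {a b c d e f : V}
    (h : ([a, b, c, d, e, f] : List V).Nodup) :
    cycEdges a b c d ≠ cycEdges a e c f := by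
  intro heq
  have hb : s(a, b) ∈ cycEdges a e c f := by rw [← heq]; simp [cycEdges]
  simp [cycEdges, Sym2.eq_iff] at hb
  simp [List.nodup_cons] at h
  tauto

lemma diag_not_mem' {V : Type*} [DecidableEq V] {a b c d : V}
    (h : ([a, b, c, d] : List V).Nodup) :
    s(a, c) ∉ cycEdges a b c d := by
  simp [cycEdges, Sym2.eq_iff] at *
  tauto

lemma mem_edgeVerts' {V : Type*} [DecidableEq V] {x y : V} {E : Finset (Sym2 V)}
    (h : s(x, y) ∈ E) : x ∈ edgeVerts E ∧ y ∈ edgeVerts E := by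
  have h2 := Finset.le_sup (f := (Sym2.lift ⟨fun x y => ({x, y} : Finset V),
    fun x y => Finset.pair_comm x y⟩)) h
  simp only [Sym2.lift_mk] at h2
  exact ⟨h2 (by simp), h2 (by simp)⟩

lemma mem_cycEdges_verts' {V : Type*} [DecidableEq V] (a b c d : V) :
    a ∈ edgeVerts (cycEdges a b c d) ∧ c ∈ edgeVerts (cycEdges a b c d) := by
  refine ⟨(mem_edgeVerts' (x := a) (y := b) ?_).1, (mem_edgeVerts' (x := c) (y := d) ?_).1⟩ <;>
    simp [cycEdges]

set_option maxRecDepth 100000 in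
lemma c9_nodup : ∀ a : ZMod 9, ([0 + a, 1 + a, 8 + a, 5 + a] : List (ZMod 9)).Nodup := by
  decide

set_option maxRecDepth 100000 in
lemma c9_cover : (Finset.univ : Finset (ZMod 9 × ZMod 9)).filter
    (fun p => p.1 ≠ p.2 ∧ (C9.filter (fun E => s(p.1, p.2) ∈ E)).card ≠ 1) = ∅ := by
  decide

set_option maxRecDepth 100000 in
lemma c9_sparse_card : C9.powerset.filter
    (fun D => (D.card = 2 ∧ (D.sup edgeVerts).card = 5) ∨
              (D.card = 3 ∧ (D.sup edgeVerts).card = 6) ∨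
              (D.card = 4 ∧ (D.sup edgeVerts).card = 7)) = ∅ := by
  decide

set_option maxRecDepth 100000 in
lemma c9_diag_class : (Finset.univ : Finset (ZMod 9 × ZMod 9 × ZMod 9)).filter
    (fun q =>
      q.2.1 ∈ edgeVerts (cycEdges (0 + q.1) (1 + q.1) (8 + q.1) (5 + q.1)) ∧
      q.2.2 ∈ edgeVerts (cycEdges (0 + q.1) (1 + q.1) (8 + q.1) (5 + q.1)) ∧
      q.2.1 ≠ q.2.2 ∧ s(q.2.1, q.2.2) ∉ cycEdges (0 + q.1) (1 + q.1) (8 + q.1) (5 + q.1) ∧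
      ¬ (({q.2.1, q.2.2} : Finset (ZMod 9)) = {q.1, q.1 + 8} ∨
         ({q.2.1, q.2.2} : Finset (ZMod 9)) = {q.1 + 1, q.1 + 5}))
    = ∅ := by
  decide

set_option maxRecDepth 100000 in
lemma c9_diag_cross : ∀ t u : ZMod 9,
    (({t, t + 8} : Finset (ZMod 9)) = {u, u + 8} → t = u) ∧
    (({t, t + 8} : Finset (ZMod 9)) ≠ {u + 1, u + 5}) ∧
    (({t + 1, t + 5} : Finset (ZMod 9)) = {u + 1, u + 5} → t = u) := by
  decide

lemma nodup_six {V : Type*} [DecidableEq V] {a b c d e f : V}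
    (h : ([a, b, c, d, e, f] : List V).Nodup) :
    ([a, e, c, f] : List V).Nodup ∧ a ≠ c := by
  simp [List.nodup_cons] at h ⊢
  tauto

/-- Diagonal classification, usable form. -/
lemma c9_diag {t x y : ZMod 9}
    (hx : x ∈ edgeVerts (cycEdges (0 + t) (1 + t) (8 + t) (5 + t)))
    (hy : y ∈ edgeVerts (cycEdges (0 + t) (1 + t) (8 + t) (5 + t)))
    (hxy : x ≠ y) (hne : s(x, y) ∉ cycEdges (0 + t) (1 + t) (8 + t) (5 + t)) :
    ({x, y} : Finset (ZMod 9)) = {t, t + 8} ∨ ({x, y} : Finset (ZMod 9)) = {t + 1, t + 5} := by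
  have h := Finset.filter_eq_empty_iff.mp c9_diag_class (Finset.mem_univ (t, x, y))
  by_contra hcon
  exact h ⟨hx, hy, hxy, hne, hcon⟩

set_option maxRecDepth 100000

/-- The nine 4-cycles obtained by developing `(0, 1, 8, 5)` under `Z_9` form a
4-cycle system of order 9 which is strictly 4-sparse. -/
theorem zmod_nine_system_strictly_four_sparse :
    IsFourCycleSystem
      ((Finset.univ : Finset (ZMod 9)).image fun a =>
        cycEdges (0 + a) (1 + a) (8 + a) (5 + a)) ∧
    StrictlyRSparse 4
      ((Finset.univ : Finset (ZMod 9)).image fun a =>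
        cycEdges (0 + a) (1 + a) (8 + a) (5 + a)) := by
  have hcyc : ∀ E ∈ C9, IsFourCycle E := by
    intro E hE
    obtain ⟨a, -, rfl⟩ := Finset.mem_image.mp hE
    exact ⟨0 + a, 1 + a, 8 + a, 5 + a, c9_nodup a, rfl⟩
  refine ⟨⟨hcyc, ?_⟩, ?_, ?_⟩
  · -- edge coverage: every non-diagonal edge lies in exactly one cycle
    intro e he
    induction e using Sym2.ind with
    | _ x y =>
      have hxy : x ≠ y := fun h => he (by simp [h])
      have hcard : (C9.filter (fun E => s(x, y) ∈ E)).card = 1 := by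
        have h := Finset.filter_eq_empty_iff.mp c9_cover (Finset.mem_univ (x, y))
        by_contra hcon
        exact h ⟨hxy, hcon⟩
      obtain ⟨E0, hE0⟩ := Finset.card_eq_one.mp hcard
      have hE0m : E0 ∈ C9.filter (fun E => s(x, y) ∈ E) := by
        rw [hE0]; exact Finset.mem_singleton_self E0
      rw [Finset.mem_filter] at hE0m
      refine ⟨E0, hE0m, ?_⟩
      intro F hF
      have : F ∈ C9.filter (fun E => s(x, y) ∈ E) := Finset.mem_filter.mpr hF
      rw [hE0] at this
      exact Finset.mem_singleton.mp this
  · -- 4-sparse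
    intro j h2 h4 D hD hconf
    obtain ⟨hcard, -, -, hverts⟩ := hconf
    have hDp : D ∈ C9.powerset := Finset.mem_powerset.mpr hD
    have h := Finset.filter_eq_empty_iff.mp c9_sparse_card hDp
    interval_cases j
    · exact h (Or.inl ⟨hcard, hverts⟩)
    · exact h (Or.inr (Or.inl ⟨hcard, hverts⟩))
    · exact h (Or.inr (Or.inr ⟨hcard, hverts⟩))
  · -- D-avoiding
    intro E hE F hF hDD
    obtain ⟨t, -, rfl⟩ := Finset.mem_image.mp hE
    obtain ⟨u, -, rfl⟩ := Finset.mem_image.mp hF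
    obtain ⟨a, b, c, d, e, f, hnd, hE2, hF2⟩ := hDD
    have hndE : ([a, b, c, d] : List (ZMod 9)).Nodup :=
      hnd.sublist (List.sublist_append_left [a, b, c, d] [e, f])
    have hndF : ([a, e, c, f] : List (ZMod 9)).Nodup := (nodup_six hnd).1
    have hac : a ≠ c := (nodup_six hnd).2
    -- a, c are a diagonal of the translate by t
    have hvE := mem_cycEdges_verts' a b c d
    rw [← hE2] at hvE
    have hnE : s(a, c) ∉ cycEdges (0 + t) (1 + t) (8 + t) (5 + t) := by
      rw [hE2]; exact diag_not_mem' hndE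
    have hdE := c9_diag hvE.1 hvE.2 hac hnE
    -- a, c are a diagonal of the translate by u
    have hvF := mem_cycEdges_verts' a e c f
    rw [← hF2] at hvF
    have hnF : s(a, c) ∉ cycEdges (0 + u) (1 + u) (8 + u) (5 + u) := by
      rw [hF2]; exact diag_not_mem' hndF
    have hdF := c9_diag hvF.1 hvF.2 hac hnF
    -- hence t = u
    have htu : t = u := by
      rcases hdE with h1 | h1 <;> rcases hdF with h2 | h2
      · exact (c9_diag_cross t u).1 (h1 ▸ h2)
      · exact absurd (h1 ▸ h2) (c9_diag_cross t u).2.1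
      · exact absurd (h2 ▸ h1) (c9_diag_cross u t).2.1
      · exact (c9_diag_cross t u).2.2 (h1 ▸ h2)
    subst htu
    exact dd_ne' hnd (hE2.symm.trans hF2)
end

section
/- For any integer r ≥ 2 there exist a constant c > 0 and an integer v_0 such that for every integer v ≥ v_0 there exists a strictly r-sparse 4-cycle packing of order v with at least c·v² 4-cycles. -/
open Finset

section Aux
variable {V : Type*} [DecidableEq V]

lemma mem_edgeVerts_of_mem {E : Finset (Sym2 V)} {e : Sym2 V} (he : e ∈ E) {x : V}
    (hx : x ∈ e) : x ∈ edgeVerts E := by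
  induction e with
  | _ p q =>
    have : x ∈ ({p, q} : Finset V) := by
      rcases Sym2.mem_iff.mp hx with h | h <;> simp [h]
    exact Finset.mem_of_subset (Finset.le_sup (f := (Sym2.lift ⟨fun x y => ({x, y} : Finset V),
      fun x y => Finset.pair_comm x y⟩)) he) (by simpa using this)

lemma edgeVerts_subset {E : Finset (Sym2 V)} {W : Finset V} :
    edgeVerts E ⊆ W ↔ ∀ e ∈ E, ∀ x ∈ e, x ∈ W := by
  constructor
  · intro h e he x hx
    exact h (mem_edgeVerts_of_mem he hx)
  · intro h
    show edgeVerts E ≤ W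
    apply Finset.sup_le
    intro e he
    induction e with
    | _ p q =>
      intro x hx
      simp only [Sym2.lift_mk] at hx
      rcases Finset.mem_insert.mp hx with h' | h'
      · subst h'; exact h _ he x (by simp)
      · simp only [Finset.mem_singleton] at h'; subst h'; exact h _ he x (by simp)

lemma edgeVerts_cycEdges (a b c d : V) :
    edgeVerts (cycEdges a b c d) = {a, b, c, d} := by
  ext x
  simp [edgeVerts, cycEdges, Sym2.lift_mk]
  aesop

lemma edgeVerts_mono {E F : Finset (Sym2 V)} (h : E ⊆ F) : edgeVerts E ⊆ edgeVerts F := by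
  show edgeVerts E ≤ edgeVerts F; exact Finset.sup_mono h

lemma card_edgeVerts_le {E : Finset (Sym2 V)} (hE : IsFourCycle E) :
    (edgeVerts E).card ≤ 4 := by
  obtain ⟨a, b, c, d, -, rfl⟩ := hE
  rw [edgeVerts_cycEdges]
  apply le_trans (Finset.card_insert_le _ _)
  have := Finset.card_insert_le b ({c, d} : Finset V)
  have := Finset.card_insert_le c ({d} : Finset V)
  simp_all
  omega

lemma exists_endpoints {E : Finset (Sym2 V)} (hE : IsFourCycle E) {e : Sym2 V} (he : e ∈ E) :
    ∃ x y : V, x ≠ y ∧ x ∈ e ∧ y ∈ e := by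
  obtain ⟨a, b, c, d, hnd, rfl⟩ := hE
  simp only [List.nodup_cons, List.mem_cons, List.not_mem_nil, or_false, List.nodup_nil] at hnd
  simp only [cycEdges, Finset.mem_insert, Finset.mem_singleton] at he
  rcases he with rfl | rfl | rfl | rfl
  · exact ⟨a, b, by tauto, by simp, by simp⟩
  · exact ⟨b, c, by tauto, by simp, by simp⟩
  · exact ⟨c, d, by tauto, by simp, by simp⟩
  · exact ⟨d, a, by tauto, by simp, by simp⟩

/-- A double diamond consists of two distinct cycles. -/
lemma IsDoubleDiamond.ne {E F : Finset (Sym2 V)} (h : IsDoubleDiamond E F) : E ≠ F := by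
  obtain ⟨a, b, c, d, e, f, hnd, rfl, rfl⟩ := h
  intro hEF
  have h1 : ({a, b, c, d} : Finset V) = {a, e, c, f} := by
    rw [← edgeVerts_cycEdges a b c d, ← edgeVerts_cycEdges a e c f, hEF]
  have hb : b ∈ ({a, e, c, f} : Finset V) := by rw [← h1]; simp
  simp only [Finset.mem_insert, Finset.mem_singleton] at hb
  simp only [List.nodup_cons, List.mem_cons, List.not_mem_nil, or_false, List.nodup_nil] at hnd
  tauto

/-- Union of the vertex sets of the two cycles of a double diamond has at most 6 vertices. -/
lemma dd_verts_le {E F : Finset (Sym2 V)} (h : IsDoubleDiamond E F) :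
    (edgeVerts E ∪ edgeVerts F).card ≤ 6 := by
  obtain ⟨a, b, c, d, e, f, hnd, rfl, rfl⟩ := h
  rw [edgeVerts_cycEdges, edgeVerts_cycEdges]
  have hsub : ({a, b, c, d} : Finset V) ∪ {a, e, c, f} ⊆ {a, b, c, d, e, f} := by
    intro x hx
    simp only [Finset.mem_union, Finset.mem_insert, Finset.mem_singleton] at hx ⊢
    tauto
  calc (({a, b, c, d} : Finset V) ∪ {a, e, c, f}).card ≤ ({a, b, c, d, e, f} : Finset V).card :=
        Finset.card_le_card hsub
    _ ≤ 6 := by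
        refine le_trans (Finset.card_insert_le _ _) (Nat.add_le_add_right ?_ 1)
        refine le_trans (Finset.card_insert_le _ _) (Nat.add_le_add_right ?_ 1)
        refine le_trans (Finset.card_insert_le _ _) (Nat.add_le_add_right ?_ 1)
        refine le_trans (Finset.card_insert_le _ _) (Nat.add_le_add_right ?_ 1)
        refine le_trans (Finset.card_insert_le _ _) (Nat.add_le_add_right ?_ 1)
        simp

/-- Two non-edge-disjoint four-cycles cover at most 6 vertices. -/
lemma shared_edge_verts_le {E F : Finset (Sym2 V)} (hE : IsFourCycle E) (hF : IsFourCycle F)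
    (h : ¬ Disjoint E F) : (edgeVerts E ∪ edgeVerts F).card ≤ 6 := by
  obtain ⟨e, heE, heF⟩ := Finset.not_disjoint_iff.mp h
  obtain ⟨x, y, hxy, hxe, hye⟩ := exists_endpoints hE heE
  have hxE := mem_edgeVerts_of_mem heE hxe
  have hyE := mem_edgeVerts_of_mem heE hye
  have hxF := mem_edgeVerts_of_mem heF hxe
  have hyF := mem_edgeVerts_of_mem heF hye
  have hsub : edgeVerts E ∪ edgeVerts F ⊆ edgeVerts E ∪ (edgeVerts F \ {x, y}) := by
    intro z hz
    rcases Finset.mem_union.mp hz with h' | h'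
    · exact Finset.mem_union_left _ h'
    · by_cases hz2 : z ∈ ({x, y} : Finset V)
      · apply Finset.mem_union_left
        simp only [Finset.mem_insert, Finset.mem_singleton] at hz2
        rcases hz2 with rfl | rfl <;> assumption
      · exact Finset.mem_union_right _ (Finset.mem_sdiff.mpr ⟨h', hz2⟩)
  have h2 : ({x, y} : Finset V) ⊆ edgeVerts F := by
    intro z hz
    simp only [Finset.mem_insert, Finset.mem_singleton] at hz
    rcases hz with rfl | rfl <;> assumption
  calc (edgeVerts E ∪ edgeVerts F).card
      ≤ (edgeVerts E ∪ (edgeVerts F \ {x, y})).card := Finset.card_le_card hsub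
    _ ≤ (edgeVerts E).card + (edgeVerts F \ {x, y}).card := Finset.card_union_le _ _
    _ ≤ 4 + 2 := by
        apply Nat.add_le_add (card_edgeVerts_le hE)
        rw [Finset.card_sdiff_of_subset h2]
        have := card_edgeVerts_le hF
        have : ({x, y} : Finset V).card = 2 := Finset.card_pair hxy
        omega
    _ = 6 := rfl
end Aux

section Counting
variable {α : Type*} [DecidableEq α]

lemma card_filter_superset (S B : Finset α) (n : ℕ) (hB : B ⊆ S) (hn : B.card ≤ n) :
    (((Finset.powersetCard n S)).filter (fun A => B ⊆ A)).card
      = (S.card - B.card).choose (n - B.card) := by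
  classical
  rw [← Finset.card_sdiff_of_subset hB, ← Finset.card_powersetCard (n - B.card) (S \ B)]
  apply Finset.card_bij' (fun A _ => A \ B) (fun A' _ => A' ∪ B)
  · intro A hA
    simp only [Finset.mem_filter, Finset.mem_powersetCard] at hA
    obtain ⟨⟨hAS, hAcard⟩, hBA⟩ := hA
    rw [Finset.mem_powersetCard]
    constructor
    · exact Finset.sdiff_subset_sdiff hAS (le_refl _)
    · rw [Finset.card_sdiff_of_subset hBA, hAcard]
  · intro A' hA'
    rw [Finset.mem_powersetCard] at hA'
    obtain ⟨hA'S, hA'card⟩ := hA'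
    have hdisj : Disjoint A' B := by
      apply Finset.disjoint_left.mpr
      intro x hx
      exact (Finset.mem_sdiff.mp (hA'S hx)).2
    simp only [Finset.mem_filter, Finset.mem_powersetCard]
    refine ⟨⟨?_, ?_⟩, Finset.subset_union_right⟩
    · apply Finset.union_subset _ hB
      exact hA'S.trans Finset.sdiff_subset
    · rw [Finset.card_union_of_disjoint hdisj, hA'card]
      omega
  · intro A hA
    simp only [Finset.mem_filter] at hA
    exact Finset.sdiff_union_of_subset hA.2
  · intro A' hA'
    rw [Finset.mem_powersetCard] at hA'
    have hdisj : Disjoint A' B := by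
      apply Finset.disjoint_left.mpr
      intro x hx
      exact (Finset.mem_sdiff.mp (hA'.1 hx)).2
    ext x
    simp only [Finset.mem_sdiff, Finset.mem_union]
    constructor
    · rintro ⟨h | h, h2⟩
      · exact h
      · exact absurd h h2
    · intro h
      exact ⟨Or.inl h, Finset.disjoint_left.mp hdisj h⟩

lemma sum_count_sub (P Bad : Finset (Finset α)) :
    ∑ A ∈ P, (Bad.filter (fun B => B ⊆ A)).card
      = ∑ B ∈ Bad, (P.filter (fun A => B ⊆ A)).card := by
  simp_rw [Finset.card_filter]
  exact Finset.sum_comm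

lemma choose_bound {M n j : ℕ} (hj : j ≤ n) (hn : n ≤ M) :
    (M - j).choose (n - j) * (M - j) ^ j ≤ M.choose n * n ^ j := by
  have key : M.choose n * n.choose j = M.choose j * (M - j).choose (n - j) :=
    Nat.choose_mul hj
  calc (M - j).choose (n - j) * (M - j) ^ j
      ≤ (M - j).choose (n - j) * M.descFactorial j := by
        apply Nat.mul_le_mul_left
        calc (M - j) ^ j ≤ (M + 1 - j) ^ j := Nat.pow_le_pow_left (by omega) j
          _ ≤ M.descFactorial j := Nat.pow_sub_le_descFactorial M j
    _ = (M - j).choose (n - j) * (j.factorial * M.choose j) := by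
        rw [Nat.descFactorial_eq_factorial_mul_choose]
    _ = j.factorial * (M.choose j * (M - j).choose (n - j)) := by ring
    _ = j.factorial * (M.choose n * n.choose j) := by rw [key]
    _ = M.choose n * (j.factorial * n.choose j) := by ring
    _ = M.choose n * n.descFactorial j := by rw [Nat.descFactorial_eq_factorial_mul_choose]
    _ ≤ M.choose n * n ^ j := Nat.mul_le_mul_left _ (Nat.descFactorial_le_pow n j)

lemma exists_le_avg {β : Type*} (s : Finset β) (hs : s.Nonempty) (f : β → ℕ) (t : ℕ)
    (h : ∑ a ∈ s, f a ≤ s.card * t) : ∃ a ∈ s, f a ≤ t := by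
  by_contra hc
  push_neg at hc
  have h1 : s.card * (t + 1) ≤ ∑ a ∈ s, f a := by
    have := Finset.card_nsmul_le_sum s f (t + 1) (fun x hx => hc x hx)
    simpa using this
  have h2 : s.card * (t + 1) ≤ s.card * t := le_trans h1 h
  have h3 : 0 < s.card := Finset.card_pos.mpr hs
  have := Nat.le_of_mul_le_mul_left h2 h3
  omega

lemma card_eq_four' {W : Finset α} (h : W.card = 4) :
    ∃ a b c d : α, ([a, b, c, d] : List α).Nodup ∧ W = {a, b, c, d} := by
  obtain ⟨a, t, hat, rfl, ht⟩ := Finset.card_eq_succ.mp h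
  obtain ⟨x, y, z, hxy, hxz, hyz, rfl⟩ := Finset.card_eq_three.mp ht
  refine ⟨a, x, y, z, ?_, rfl⟩
  simp only [Finset.mem_insert, Finset.mem_singleton] at hat
  simp only [List.nodup_cons, List.mem_cons, List.not_mem_nil, or_false, List.nodup_nil]
  tauto
end Counting

section Machinery
open scoped Classical

noncomputable def AllC (v : ℕ) : Finset (Finset (Sym2 (Fin v))) :=
  Finset.univ.filter IsFourCycle

lemma mem_AllC {v : ℕ} {E : Finset (Sym2 (Fin v))} : E ∈ AllC v ↔ IsFourCycle E := by
  simp [AllC]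

def Viol {v : ℕ} (B : Finset (Finset (Sym2 (Fin v)))) : Prop :=
  (B.card = 2 ∧ ∃ E ∈ B, ∃ F ∈ B, E ≠ F ∧ (¬ Disjoint E F ∨ IsDoubleDiamond E F)) ∨
  (2 ≤ B.card ∧ IsConfiguration (B.card + 3) B.card B)

noncomputable def Bads (r v : ℕ) : Finset (Finset (Finset (Sym2 (Fin v)))) :=
  (AllC v).powerset.filter (fun B => B.card ≤ r ∧ Viol B)

lemma mem_Bads {r v : ℕ} {B : Finset (Finset (Sym2 (Fin v)))} :
    B ∈ Bads r v ↔ B ⊆ AllC v ∧ B.card ≤ r ∧ Viol B := by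
  simp [Bads]

lemma Bads_two_le {r v : ℕ} {B : Finset (Finset (Sym2 (Fin v)))} (hB : B ∈ Bads r v) :
    2 ≤ B.card := by
  rcases (mem_Bads.mp hB).2.2 with ⟨h, -⟩ | ⟨h, -⟩ <;> omega

lemma Bads_verts {r v : ℕ} {B : Finset (Finset (Sym2 (Fin v)))} (hB : B ∈ Bads r v) :
    (B.sup edgeVerts).card ≤ B.card + 4 := by
  obtain ⟨hsub, hcard, hviol⟩ := mem_Bads.mp hB
  rcases hviol with ⟨h2, E, hE, F, hF, hne, hv⟩ | ⟨-, -, -, -, hcard'⟩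
  · have hEF : ({E, F} : Finset (Finset (Sym2 (Fin v)))) = B := by
      apply Finset.eq_of_subset_of_card_le
      · intro x hx
        simp only [Finset.mem_insert, Finset.mem_singleton] at hx
        rcases hx with rfl | rfl <;> assumption
      · rw [h2, Finset.card_pair hne]
    have hsup : B.sup edgeVerts = edgeVerts E ∪ edgeVerts F := by
      rw [← hEF, Finset.sup_insert, Finset.sup_singleton, Finset.sup_eq_union]
    rw [hsup, h2]
    have hIE : IsFourCycle E := mem_AllC.mp (hsub hE)
    have hIF : IsFourCycle F := mem_AllC.mp (hsub hF)
    rcases hv with h | h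
    · exact shared_edge_verts_le hIE hIF h
    · exact dd_verts_le h
  · omega

noncomputable def edgesOn {v : ℕ} (W : Finset (Fin v)) : Finset (Sym2 (Fin v)) :=
  Finset.univ.filter (fun e => ∀ x ∈ e, x ∈ W)

lemma card_edgesOn {v : ℕ} (W : Finset (Fin v)) : (edgesOn W).card ≤ W.card ^ 2 := by
  have hsurj : Set.SurjOn (fun p : Fin v × Fin v => s(p.1, p.2)) ↑(W ×ˢ W) ↑(edgesOn W) := by
    intro e he
    simp only [Finset.coe_filter, Set.mem_setOf_eq, edgesOn, Finset.mem_coe,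
      Finset.mem_filter] at he
    induction e with
    | _ p q =>
      refine ⟨(p, q), ?_, rfl⟩
      simp only [Finset.coe_product, Set.mem_prod, Finset.mem_coe]
      exact ⟨he.2 p (by simp), he.2 q (by simp)⟩
  calc (edgesOn W).card ≤ (W ×ˢ W).card := Finset.card_le_card_of_surjOn _ hsurj
    _ = W.card ^ 2 := by rw [Finset.card_product]; ring

lemma Bads_filter_card {r v : ℕ} (j : ℕ) (hj : j ≤ r) (hv : 1 ≤ v) :
    ((Bads r v).filter (fun B => B.card = j)).card
      ≤ ((r + 5) * 2 ^ (2 ^ ((r + 4) ^ 2))) * v ^ (j + 4) := by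
  set T := (Finset.univ : Finset (Finset (Fin v))).filter (fun W => W.card ≤ j + 4) with hT
  have hmap : ∀ B ∈ (Bads r v).filter (fun B => B.card = j), B.sup edgeVerts ∈ T := by
    intro B hB
    rw [Finset.mem_filter] at hB
    rw [hT, Finset.mem_filter]
    refine ⟨Finset.mem_univ _, ?_⟩
    have := Bads_verts hB.1
    omega
  rw [Finset.card_eq_sum_card_fiberwise hmap]
  have hfiber : ∀ W ∈ T,
      (((Bads r v).filter (fun B => B.card = j)).filter (fun B => B.sup edgeVerts = W)).card
        ≤ 2 ^ (2 ^ ((r + 4) ^ 2)) := by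
    intro W hW
    rw [hT, Finset.mem_filter] at hW
    have hsub : ((Bads r v).filter (fun B => B.card = j)).filter (fun B => B.sup edgeVerts = W)
        ⊆ ((edgesOn W).powerset).powerset := by
      intro B hB
      simp only [Finset.mem_filter] at hB
      rw [Finset.mem_powerset]
      intro E hE
      rw [Finset.mem_powerset]
      intro e he
      simp only [edgesOn, Finset.mem_filter]
      refine ⟨Finset.mem_univ _, fun x hx => ?_⟩
      have h1 : x ∈ edgeVerts E := mem_edgeVerts_of_mem he hx
      have h2 : edgeVerts E ⊆ B.sup edgeVerts := Finset.le_sup hE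
      rw [hB.2] at h2
      exact h2 h1
    calc _ ≤ ((edgesOn W).powerset).powerset.card := Finset.card_le_card hsub
      _ = 2 ^ (2 ^ (edgesOn W).card) := by rw [Finset.card_powerset, Finset.card_powerset]
      _ ≤ 2 ^ (2 ^ ((r + 4) ^ 2)) := by
          apply Nat.pow_le_pow_right (by norm_num)
          apply Nat.pow_le_pow_right (by norm_num)
          calc (edgesOn W).card ≤ W.card ^ 2 := card_edgesOn W
            _ ≤ ((r + 4)) ^ 2 := Nat.pow_le_pow_left (by omega) 2
  have hTcard : T.card ≤ (r + 5) * v ^ (j + 4) := by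
    have hsubT : T ⊆ (Finset.range (j + 5)).biUnion
        (fun k => Finset.powersetCard k Finset.univ) := by
      intro W hW
      rw [hT, Finset.mem_filter] at hW
      rw [Finset.mem_biUnion]
      exact ⟨W.card, Finset.mem_range.mpr (by omega),
        Finset.mem_powersetCard.mpr ⟨Finset.subset_univ _, rfl⟩⟩
    calc T.card ≤ _ := Finset.card_le_card hsubT
      _ ≤ ∑ k ∈ Finset.range (j + 5), (Finset.powersetCard k (Finset.univ : Finset (Fin v))).card :=
          Finset.card_biUnion_le
      _ ≤ ∑ k ∈ Finset.range (j + 5), v ^ (j + 4) := by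
          apply Finset.sum_le_sum
          intro k hk
          rw [Finset.card_powersetCard, Finset.card_univ, Fintype.card_fin]
          calc v.choose k ≤ v ^ k := Nat.choose_le_pow v k
            _ ≤ v ^ (j + 4) := Nat.pow_le_pow_right hv (by
                have := Finset.mem_range.mp hk; omega)
      _ = (j + 5) * v ^ (j + 4) := by rw [Finset.sum_const, Finset.card_range, smul_eq_mul]
      _ ≤ (r + 5) * v ^ (j + 4) := Nat.mul_le_mul_right _ (by omega)
  calc ∑ W ∈ T, (((Bads r v).filter (fun B => B.card = j)).filter
        (fun B => B.sup edgeVerts = W)).card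
      ≤ ∑ W ∈ T, 2 ^ (2 ^ ((r + 4) ^ 2)) := Finset.sum_le_sum hfiber
    _ = T.card * 2 ^ (2 ^ ((r + 4) ^ 2)) := by rw [Finset.sum_const, smul_eq_mul]
    _ ≤ ((r + 5) * v ^ (j + 4)) * 2 ^ (2 ^ ((r + 4) ^ 2)) :=
        Nat.mul_le_mul_right _ hTcard
    _ = ((r + 5) * 2 ^ (2 ^ ((r + 4) ^ 2))) * v ^ (j + 4) := by ring

lemma choose_le_AllC_card (v : ℕ) : v.choose 4 ≤ (AllC v).card := by
  have hsurj : Set.SurjOn (edgeVerts : Finset (Sym2 (Fin v)) → Finset (Fin v)) ↑(AllC v)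
      ((Finset.powersetCard 4 (Finset.univ : Finset (Fin v)) : Finset (Finset (Fin v))) :
        Set (Finset (Fin v))) := by
    intro W hW
    simp only [Finset.mem_coe, Finset.mem_powersetCard] at hW
    obtain ⟨a, b, c, d, hnd, rfl⟩ := card_eq_four' hW.2
    refine ⟨cycEdges a b c d, ?_, ?_⟩
    · simp only [Finset.mem_coe, mem_AllC]
      exact ⟨a, b, c, d, hnd, rfl⟩
    · exact edgeVerts_cycEdges a b c d
  have := Finset.card_le_card_of_surjOn _ hsurj
  rwa [Finset.card_powersetCard, Finset.card_univ, Fintype.card_fin] at this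

lemma M_large {v r : ℕ} (h6 : 6 ≤ v) (hrv : 125 * r + 3 ≤ v) :
    v ^ 4 + 500 * r ≤ 500 * v.choose 4 := by
  have h1 : (v - 3) ^ 4 ≤ v.descFactorial 4 := by
    have h := Nat.pow_sub_le_descFactorial v 4
    have e : v + 1 - 4 = v - 3 := by omega
    rwa [e] at h
  have h2 : v.descFactorial 4 = 24 * v.choose 4 := by
    rw [Nat.descFactorial_eq_factorial_mul_choose]
    norm_num [Nat.factorial]
  have h3 : v ^ 4 ≤ 16 * (v - 3) ^ 4 := by
    have hv : v ≤ 2 * (v - 3) := by omega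
    calc v ^ 4 ≤ (2 * (v - 3)) ^ 4 := Nat.pow_le_pow_left hv 4
      _ = 16 * (v - 3) ^ 4 := by ring
  have h4 : 500 * r ≤ 4 * (v - 3) ^ 4 := by
    have ha : 125 * r ≤ v - 3 := by omega
    have hb : v - 3 ≤ (v - 3) ^ 4 := Nat.le_self_pow (by norm_num) _
    omega
  have h5 : 20 * (v - 3) ^ 4 ≤ 500 * v.choose 4 := by
    calc 20 * (v - 3) ^ 4 ≤ 20 * v.descFactorial 4 := Nat.mul_le_mul_left _ h1
      _ = 480 * v.choose 4 := by rw [h2]; ring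
      _ ≤ 500 * v.choose 4 := Nat.mul_le_mul_right _ (by norm_num)
  omega
end Machinery

section MainCount
open scoped Classical

lemma numeric_b3 {r v j n M D₀ K : ℕ}
    (hK : K = (r + 5) * 2 ^ (2 ^ ((r + 4) ^ 2)))
    (hD : D₀ = 4 * r ^ 2 * K * 500 ^ (r + 1))
    (hj2 : 2 ≤ j) (hjr : j ≤ r)
    (hnD : n * D₀ ≤ v ^ 2)
    (hM : v ^ 4 + 500 * r ≤ 500 * M)
    (hv : 1 ≤ v) :
    4 * r ^ 2 * (K * v ^ (j + 4)) * n ^ j ≤ n * (M - j) ^ j := by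
  have hr2 : 2 ≤ r := le_trans hj2 hjr
  have hrpos : 0 < r := by omega
  have hKpos : 1 ≤ K := by
    have : 0 < (r + 5) * 2 ^ (2 ^ ((r + 4) ^ 2)) := by positivity
    omega
  have hDpos : 1 ≤ D₀ := by
    have : 0 < 4 * r ^ 2 * K * 500 ^ (r + 1) := by positivity
    omega
  have h500 : v ^ 4 ≤ 500 * (M - j) := by
    have h1 : v ^ 4 + 500 * r ≤ 500 * M := hM
    have h2 : j ≤ r := hjr
    have h3 : 0 < v ^ 4 := Nat.pow_pos (by omega)
    omega
  have hposc : 0 < 500 ^ j * D₀ ^ (j - 1) := by positivity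
  apply Nat.le_of_mul_le_mul_right _ hposc
  calc (4 * r ^ 2 * (K * v ^ (j + 4)) * n ^ j) * (500 ^ j * D₀ ^ (j - 1))
      = n * ((4 * r ^ 2 * K * 500 ^ j) * (v ^ (j + 4) * (n ^ (j - 1) * D₀ ^ (j - 1)))) := by
        have hnj : n ^ j = n * n ^ (j - 1) := by
          rw [← pow_succ']
          congr 1
          omega
        rw [hnj]; ring
    _ = n * ((4 * r ^ 2 * K * 500 ^ j) * (v ^ (j + 4) * (n * D₀) ^ (j - 1))) := by
        rw [mul_pow]
    _ ≤ n * ((4 * r ^ 2 * K * 500 ^ j) * (v ^ (j + 4) * (v ^ 2) ^ (j - 1))) := by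
        gcongr
    _ = n * ((4 * r ^ 2 * K * 500 ^ j) * v ^ (3 * j + 2)) := by
        rw [← pow_mul, ← pow_add]
        congr 3
        omega
    _ ≤ n * (D₀ * v ^ (3 * j + 2)) := by
        have h5 : 4 * r ^ 2 * K * 500 ^ j ≤ D₀ := by
          rw [hD]
          have : (500:ℕ) ^ j ≤ 500 ^ (r + 1) := Nat.pow_le_pow_right (by norm_num) (by omega)
          exact Nat.mul_le_mul_left _ this
        gcongr
    _ ≤ n * (D₀ * (v ^ (3 * j + 2) * v ^ (j - 2))) := by
        have : 1 ≤ v ^ (j - 2) := Nat.one_le_pow _ _ (by omega)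
        have h6 : v ^ (3 * j + 2) ≤ v ^ (3 * j + 2) * v ^ (j - 2) := by
          calc v ^ (3 * j + 2) = v ^ (3 * j + 2) * 1 := (mul_one _).symm
            _ ≤ v ^ (3 * j + 2) * v ^ (j - 2) := Nat.mul_le_mul_left _ this
        gcongr
    _ = n * (D₀ * v ^ (4 * j)) := by
        rw [← pow_add]
        congr 3
        omega
    _ = n * ((v ^ 4) ^ j * D₀) := by rw [← pow_mul]; ring
    _ ≤ n * ((500 * (M - j)) ^ j * D₀) := by gcongr
    _ = n * ((M - j) ^ j * (500 ^ j * D₀ ^ 1)) := by rw [mul_pow, pow_one]; ring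
    _ ≤ n * ((M - j) ^ j * (500 ^ j * D₀ ^ (j - 1))) := by
        have : D₀ ^ 1 ≤ D₀ ^ (j - 1) := Nat.pow_le_pow_right hDpos (by omega)
        gcongr
    _ = (n * (M - j) ^ j) * (500 ^ j * D₀ ^ (j - 1)) := by ring

lemma sum_bound (r v n : ℕ) (hr : 2 ≤ r) (hv : 1 ≤ v)
    (hn2 : 2 ≤ n) (hrn : r < n) (hnM : n ≤ (AllC v).card)
    (hb3 : ∀ j, 2 ≤ j → j ≤ r →
      4 * r ^ 2 * ((r + 5) * 2 ^ (2 ^ ((r + 4) ^ 2)) * v ^ (j + 4)) * n ^ j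
        ≤ n * ((AllC v).card - j) ^ j) :
    ∑ A ∈ Finset.powersetCard n (AllC v), r * ((Bads r v).filter (fun B => B ⊆ A)).card
      ≤ ((AllC v).card.choose n) * (n / 2) := by
  set M := (AllC v).card with hM
  set K := (r + 5) * 2 ^ (2 ^ ((r + 4) ^ 2)) with hK
  -- rewrite the sum by double counting
  have e1 : ∑ A ∈ Finset.powersetCard n (AllC v), ((Bads r v).filter (fun B => B ⊆ A)).card
      = ∑ B ∈ Bads r v, ((Finset.powersetCard n (AllC v)).filter (fun A => B ⊆ A)).card :=
    sum_count_sub _ _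
  have e2 : ∀ B ∈ Bads r v,
      ((Finset.powersetCard n (AllC v)).filter (fun A => B ⊆ A)).card
        = (M - B.card).choose (n - B.card) := by
    intro B hB
    have h1 : B ⊆ AllC v := (mem_Bads.mp hB).1
    have h2 : B.card ≤ n := le_trans (mem_Bads.mp hB).2.1 (le_of_lt hrn)
    exact card_filter_superset _ _ _ h1 h2
  have e3 : ∑ B ∈ Bads r v, ((Finset.powersetCard n (AllC v)).filter (fun A => B ⊆ A)).card
      = ∑ j ∈ Finset.Icc 2 r, ∑ B ∈ (Bads r v).filter (fun B => B.card = j),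
          (M - j).choose (n - j) := by
    rw [Finset.sum_congr rfl e2]
    rw [← Finset.sum_fiberwise_of_maps_to (g := fun B => B.card) (t := Finset.Icc 2 r)]
    · apply Finset.sum_congr rfl
      intro j _
      apply Finset.sum_congr rfl
      intro B hB
      rw [Finset.mem_filter] at hB
      rw [hB.2]
    · intro B hB
      rw [Finset.mem_Icc]
      exact ⟨Bads_two_le hB, (mem_Bads.mp hB).2.1⟩
  -- per-j bound
  have perj : ∀ j ∈ Finset.Icc 2 r,
      4 * r ^ 2 * (∑ B ∈ (Bads r v).filter (fun B => B.card = j), (M - j).choose (n - j))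
        ≤ M.choose n * n := by
    intro j hj
    rw [Finset.mem_Icc] at hj
    rw [Finset.sum_const, smul_eq_mul]
    have b1 : ((Bads r v).filter (fun B => B.card = j)).card ≤ K * v ^ (j + 4) :=
      Bads_filter_card j hj.2 hv
    have hjn : j ≤ n := le_trans hj.2 (le_of_lt hrn)
    have b2 : (M - j).choose (n - j) * (M - j) ^ j ≤ M.choose n * n ^ j :=
      choose_bound hjn hnM
    have b3 := hb3 j hj.1 hj.2
    have hMjpos : 0 < (M - j) ^ j := by
      have : j < M := lt_of_lt_of_le (lt_of_le_of_lt hj.2 hrn) hnM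
      exact Nat.pow_pos (by omega)
    apply Nat.le_of_mul_le_mul_right _ hMjpos
    calc 4 * r ^ 2 * (((Bads r v).filter (fun B => B.card = j)).card
          * (M - j).choose (n - j)) * (M - j) ^ j
        ≤ 4 * r ^ 2 * ((K * v ^ (j + 4)) * (M - j).choose (n - j)) * (M - j) ^ j := by gcongr
      _ = 4 * r ^ 2 * (K * v ^ (j + 4)) * ((M - j).choose (n - j) * (M - j) ^ j) := by ring
      _ ≤ 4 * r ^ 2 * (K * v ^ (j + 4)) * (M.choose n * n ^ j) := by gcongr
      _ = (4 * r ^ 2 * (K * v ^ (j + 4)) * n ^ j) * M.choose n := by ring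
      _ ≤ (n * (M - j) ^ j) * M.choose n := by
          apply Nat.mul_le_mul_right
          exact b3
      _ = M.choose n * n * (M - j) ^ j := by ring
  -- combine
  have hsum : 4 * r ^ 2 * (∑ A ∈ Finset.powersetCard n (AllC v),
      ((Bads r v).filter (fun B => B ⊆ A)).card) ≤ r * (M.choose n * n) := by
    rw [e1, e3, Finset.mul_sum]
    calc ∑ j ∈ Finset.Icc 2 r, 4 * r ^ 2 * ∑ B ∈ (Bads r v).filter (fun B => B.card = j),
          (M - j).choose (n - j)
        ≤ ∑ j ∈ Finset.Icc 2 r, M.choose n * n := Finset.sum_le_sum perj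
      _ = (Finset.Icc 2 r).card * (M.choose n * n) := by rw [Finset.sum_const, smul_eq_mul]
      _ ≤ r * (M.choose n * n) := by
          apply Nat.mul_le_mul_right
          rw [Nat.card_Icc]
          omega
  -- cancel r, then convert n to 4 * (n/2)
  have hr0 : 0 < r := by omega
  have step1 : 4 * r * (∑ A ∈ Finset.powersetCard n (AllC v),
      ((Bads r v).filter (fun B => B ⊆ A)).card) ≤ M.choose n * n := by
    apply Nat.le_of_mul_le_mul_left _ hr0
    calc r * (4 * r * ∑ A ∈ Finset.powersetCard n (AllC v),
          ((Bads r v).filter (fun B => B ⊆ A)).card)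
        = 4 * r ^ 2 * ∑ A ∈ Finset.powersetCard n (AllC v),
            ((Bads r v).filter (fun B => B ⊆ A)).card := by ring
      _ ≤ r * (M.choose n * n) := hsum
  have hn4 : n ≤ 4 * (n / 2) := by omega
  have step2 : 4 * (∑ A ∈ Finset.powersetCard n (AllC v),
      r * ((Bads r v).filter (fun B => B ⊆ A)).card) ≤ 4 * (M.choose n * (n / 2)) := by
    calc 4 * (∑ A ∈ Finset.powersetCard n (AllC v),
          r * ((Bads r v).filter (fun B => B ⊆ A)).card)
        = 4 * r * (∑ A ∈ Finset.powersetCard n (AllC v),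
            ((Bads r v).filter (fun B => B ⊆ A)).card) := by
          rw [← Finset.mul_sum]; ring
      _ ≤ M.choose n * n := step1
      _ ≤ M.choose n * (4 * (n / 2)) := Nat.mul_le_mul_left _ hn4
      _ = 4 * (M.choose n * (n / 2)) := by ring
  omega
end MainCount

/-- For any `r ≥ 2` there are `c > 0` and `v₀` such that every order `v ≥ v₀` admits a
strictly `r`-sparse 4-cycle packing with at least `c * v ^ 2` 4-cycles. -/
theorem exists_strictly_r_sparse_packing_quadratic (r : ℕ) (hr : 2 ≤ r) :
    ∃ c : ℝ, 0 < c ∧ ∃ v₀ : ℕ, ∀ v : ℕ, v₀ ≤ v →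
      ∃ D : Finset (Finset (Sym2 (Fin v))),
        IsFourCyclePacking D ∧ StrictlyRSparse r D ∧
          c * (v : ℝ) ^ 2 ≤ (D.card : ℝ) := by
  classical
  set K := (r + 5) * 2 ^ (2 ^ ((r + 4) ^ 2)) with hK
  set D₀ := 4 * r ^ 2 * K * 500 ^ (r + 1) with hD
  have hKpos : 1 ≤ K := by
    have : 0 < (r + 5) * 2 ^ (2 ^ ((r + 4) ^ 2)) := by positivity
    omega
  have hDpos : 1 ≤ D₀ := by
    have hr0 : 0 < r := by omega
    have : 0 < 4 * r ^ 2 * K * 500 ^ (r + 1) := by positivity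
    omega
  have hD₀pos : 0 < D₀ := hDpos
  refine ⟨1 / (4 * (D₀ : ℝ)), by positivity, 2 * D₀ + 125 * r + 503, ?_⟩
  intro v hv
  have hv1 : 1 ≤ v := by omega
  have h6 : 6 ≤ v := by omega
  have hrv : 125 * r + 3 ≤ v := by omega
  set M := (AllC v).card with hM
  have hMlarge : v ^ 4 + 500 * r ≤ 500 * M :=
    le_trans (M_large h6 hrv) (Nat.mul_le_mul_left _ (choose_le_AllC_card v))
  set n := v ^ 2 / D₀ with hn
  have hnD : n * D₀ ≤ v ^ 2 := Nat.div_mul_le_self _ _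
  have hvv : v ≤ v ^ 2 := by nlinarith
  have hv2D : 2 * D₀ ≤ v ^ 2 := le_trans (by omega) hvv
  have hn2 : 2 ≤ n := (Nat.le_div_iff_mul_le hD₀pos).mpr hv2D
  have hrn : r < n := by
    have h1 : r + 1 ≤ v := by omega
    have h2 : D₀ ≤ v := by omega
    have h3 : (r + 1) * D₀ ≤ v ^ 2 := by
      calc (r + 1) * D₀ ≤ v * v := Nat.mul_le_mul h1 h2
        _ = v ^ 2 := (sq v).symm
    have := (Nat.le_div_iff_mul_le hD₀pos).mpr h3
    omega
  have hv2M : v ^ 2 ≤ M := by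
    have h500 : 500 ≤ v ^ 2 := by nlinarith
    have h1 : 500 * v ^ 2 ≤ v ^ 4 := by
      calc 500 * v ^ 2 ≤ v ^ 2 * v ^ 2 := Nat.mul_le_mul_right _ h500
        _ = v ^ 4 := by ring
    omega
  have hnM : n ≤ M := le_trans (Nat.div_le_self _ _) hv2M
  have hb3 : ∀ j, 2 ≤ j → j ≤ r →
      4 * r ^ 2 * (K * v ^ (j + 4)) * n ^ j ≤ n * (M - j) ^ j :=
    fun j hj2 hjr => numeric_b3 hK hD hj2 hjr hnD hMlarge hv1
  have hsum := sum_bound r v n hr hv1 hn2 hrn hnM hb3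
  have hPne : (Finset.powersetCard n (AllC v)).Nonempty :=
    Finset.powersetCard_nonempty.mpr hnM
  have hPcard : (Finset.powersetCard n (AllC v)).card = M.choose n :=
    Finset.card_powersetCard _ _
  obtain ⟨A₀, hA₀, hbadA₀⟩ := exists_le_avg _ hPne
    (fun A => r * ((Bads r v).filter (fun B => B ⊆ A)).card) (n / 2)
    (by rw [hPcard]; exact hsum)
  rw [Finset.mem_powersetCard] at hA₀
  obtain ⟨hA₀sub, hA₀card⟩ := hA₀
  set D := A₀.filter (fun C => ∀ B ∈ Bads r v, B ⊆ A₀ → C ∉ B) with hDdef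
  have hDsubA : D ⊆ A₀ := Finset.filter_subset _ _
  have hDAll : D ⊆ AllC v := hDsubA.trans hA₀sub
  have hNoBad : ∀ B ∈ Bads r v, ¬ B ⊆ D := by
    intro B hB hBD
    have h2 := Bads_two_le hB
    obtain ⟨x, hx⟩ : B.Nonempty := Finset.card_pos.mp (by omega)
    have hxD := hBD hx
    rw [hDdef, Finset.mem_filter] at hxD
    exact hxD.2 B hB (hBD.trans hDsubA) hx
  have hPairBad : ∀ E ∈ D, ∀ F ∈ D, E ≠ F →
      (¬ Disjoint E F ∨ IsDoubleDiamond E F) → False := by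
    intro E hE F hF hne hbad
    apply hNoBad {E, F} ?_ ?_
    · rw [mem_Bads]
      refine ⟨?_, ?_, Or.inl ⟨Finset.card_pair hne, E, by simp, F, by simp, hne, hbad⟩⟩
      · intro x hx
        simp only [Finset.mem_insert, Finset.mem_singleton] at hx
        rcases hx with rfl | rfl
        · exact hDAll hE
        · exact hDAll hF
      · rw [Finset.card_pair hne]; exact hr
    · intro x hx
      simp only [Finset.mem_insert, Finset.mem_singleton] at hx
      rcases hx with rfl | rfl
      · exact hE
      · exact hF
  have hdel : A₀ \ D ⊆ ((Bads r v).filter (fun B => B ⊆ A₀)).biUnion id := by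
    intro x hx
    rw [Finset.mem_sdiff] at hx
    rw [Finset.mem_biUnion]
    have h1 := hx.2
    rw [hDdef, Finset.mem_filter] at h1
    push_neg at h1
    obtain ⟨B, hB, hBA, hxB⟩ := h1 hx.1
    exact ⟨B, Finset.mem_filter.mpr ⟨hB, hBA⟩, hxB⟩
  have hcard1 : (A₀ \ D).card ≤ r * ((Bads r v).filter (fun B => B ⊆ A₀)).card := by
    calc (A₀ \ D).card
        ≤ (((Bads r v).filter (fun B => B ⊆ A₀)).biUnion id).card :=
          Finset.card_le_card hdel
      _ ≤ ∑ B ∈ (Bads r v).filter (fun B => B ⊆ A₀), (id B).card :=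
          Finset.card_biUnion_le
      _ ≤ ((Bads r v).filter (fun B => B ⊆ A₀)).card * r := by
          rw [← smul_eq_mul]
          apply Finset.sum_le_card_nsmul
          intro B hB
          exact (mem_Bads.mp (Finset.mem_filter.mp hB).1).2.1
      _ = r * ((Bads r v).filter (fun B => B ⊆ A₀)).card := by ring
  have hDcard : n - n / 2 ≤ D.card := by
    have h1 : (A₀ \ D).card ≤ n / 2 := le_trans hcard1 hbadA₀
    have h2 : (A₀ \ D).card = A₀.card - D.card := Finset.card_sdiff_of_subset hDsubA
    have h3 : D.card ≤ A₀.card := Finset.card_le_card hDsubA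
    omega
  refine ⟨D, ⟨?_, ?_⟩, ⟨?_, ?_⟩, ?_⟩
  · intro E hE
    exact mem_AllC.mp (hDAll hE)
  · intro E hE F hF hne
    by_contra hnd
    exact hPairBad E hE F hF hne (Or.inl hnd)
  · -- RSparse
    intro j hj2 hjr D' hD'sub hconf
    apply hNoBad D' ?_ hD'sub
    rw [mem_Bads]
    have hcard := hconf.1
    refine ⟨hD'sub.trans hDAll, by rw [hcard]; exact hjr, Or.inr ⟨by omega, ?_⟩⟩
    rw [hcard]
    exact hconf
  · -- DAvoiding
    intro E hE F hF hdd
    exact hPairBad E hE F hF hdd.ne (Or.inr hdd)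
  · -- cardinality
    have hmod := Nat.div_add_mod (v ^ 2) D₀
    rw [← hn] at hmod
    have hmodlt : v ^ 2 % D₀ < D₀ := Nat.mod_lt _ hD₀pos
    have hlt : v ^ 2 < D₀ * n + D₀ := by omega
    have hclaim : v ^ 2 ≤ 4 * D₀ * D.card := by
      have h2m : n ≤ 2 * (n - n / 2) := by omega
      have step : v ^ 2 ≤ 2 * (D₀ * n) := by
        have : D₀ ≤ D₀ * n := Nat.le_mul_of_pos_right _ (by omega)
        omega
      calc v ^ 2 ≤ 2 * (D₀ * n) := step
        _ ≤ 2 * (D₀ * (2 * (n - n / 2))) := by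
            apply Nat.mul_le_mul_left
            exact Nat.mul_le_mul_left _ h2m
        _ = 4 * D₀ * (n - n / 2) := by ring
        _ ≤ 4 * D₀ * D.card := Nat.mul_le_mul_left _ hDcard
    have hcast : ((v : ℝ)) ^ 2 ≤ 4 * (D₀ : ℝ) * (D.card : ℝ) := by
      exact_mod_cast hclaim
    rw [div_mul_eq_mul_div, one_mul, div_le_iff₀ (by positivity)]
    linarith
end
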